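/- Let a group Γ act on a set X, fix a base point x₀ ∈ X, and let ψ : Γ → (X → ℝ) be a family of functions such that ψ_e is identically zero, ψ_γ(x₀) = 0 for every γ ∈ Γ, and for all γ, γ' ∈ Γ the quantity ψ_γ(x) + ψ_{γ'}(γ·x) − ψ_{γ'γ}(x) does not depend on x ∈ X. Define σ : Γ × Γ → ℂ by σ(γ,γ') = exp(−i·ψ_γ(γ'·x₀)). Then σ is a multiplier on Γ: σ(γ,e) = σ(e,γ) = 1 for all γ ∈ Γ, and σ(γ₁,γ₂)·σ(γ₁γ₂,γ₃) = σ(γ₁,γ₂γ₃)·σ(γ₂,γ₃) for all γ₁, γ₂, γ₃ ∈ Γ (the cocycle relation). -/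

import Mathlib

/-- The phase functions `ψ_γ` of a magnetic translation family determine a multiplier
`σ(γ,γ') = exp(−i ψ_γ(γ'·x₀))` on `Γ`: it takes values in `U(1)`, is normalised at the
identity, and satisfies the cocycle relation. -/
theorem magnetic_multiplier {Γ X : Type*} [Group Γ] [MulAction Γ X] (x₀ : X)
    (ψ : Γ → X → ℝ)
    (hψe : ∀ x : X, ψ 1 x = 0)
    (hψx₀ : ∀ γ : Γ, ψ γ x₀ = 0)
    (hconst : ∀ γ γ' : Γ, ∀ x y : X,
      ψ γ x + ψ γ' (γ • x) - ψ (γ' * γ) x = ψ γ y + ψ γ' (γ • y) - ψ (γ' * γ) y)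
    (σ : Γ → Γ → ℂ)
    (hσdef : ∀ γ γ' : Γ, σ γ γ' = Complex.exp (-Complex.I * (ψ γ (γ' • x₀) : ℂ))) :
    (∀ γ γ' : Γ, ‖σ γ γ'‖ = 1) ∧
    (∀ γ : Γ, σ γ 1 = 1 ∧ σ 1 γ = 1) ∧
    (∀ γ₁ γ₂ γ₃ : Γ, σ γ₁ γ₂ * σ (γ₁ * γ₂) γ₃ = σ γ₁ (γ₂ * γ₃) * σ γ₂ γ₃) := by
  refine ⟨?_, ?_, ?_⟩
  · intro γ γ'
    rw [hσdef]
    rw [show -Complex.I * (ψ γ (γ' • x₀) : ℂ) = (-(ψ γ (γ' • x₀)) : ℝ) * Complex.I by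
      push_cast; ring]
    exact Complex.norm_exp_ofReal_mul_I _
  · intro γ
    constructor
    · rw [hσdef, one_smul, hψx₀]; simp
    · rw [hσdef, hψe]; simp
  · intro γ₁ γ₂ γ₃
    rw [hσdef, hσdef, hσdef, hσdef, ← Complex.exp_add, ← Complex.exp_add]
    congr 1
    have key := hconst γ₂ γ₁ (γ₃ • x₀) x₀
    rw [hψx₀, hψx₀, ← mul_smul] at key
    have h : ψ γ₁ (γ₂ • x₀) + ψ (γ₁ * γ₂) (γ₃ • x₀)
        = ψ γ₁ ((γ₂ * γ₃) • x₀) + ψ γ₂ (γ₃ • x₀) := by linarith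
    rw [show -Complex.I * (ψ γ₁ (γ₂ • x₀) : ℂ) + -Complex.I * (ψ (γ₁ * γ₂) (γ₃ • x₀) : ℂ)
        = -Complex.I * ((ψ γ₁ (γ₂ • x₀) + ψ (γ₁ * γ₂) (γ₃ • x₀) : ℝ) : ℂ) by push_cast; ring,
      show -Complex.I * (ψ γ₁ ((γ₂ * γ₃) • x₀) : ℂ) + -Complex.I * (ψ γ₂ (γ₃ • x₀) : ℂ)
        = -Complex.I * ((ψ γ₁ ((γ₂ * γ₃) • x₀) + ψ γ₂ (γ₃ • x₀) : ℝ) : ℂ) by push_cast; ring, h]
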